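/- For all integers N ≥ 1 and n ≥ 0: if n ≥ ⌈log₂(N+1)⌉ then f(n, N+1) − f(n, N) = n − ⌈log₂ N⌉, and if n ≤ ⌈log₂ N⌉ then f(n, N+1) − f(n, N) = 0. In particular, for each fixed n the difference f(n, N+1) − f(n, N) is nonincreasing in N. -/

import Mathlib

/-- The complexity function `f(n,N)`: `2^n - 1` for `n ≤ ⌈log₂ N⌉` and
`(N-1)(n - ⌈log₂ N⌉) + 2^{⌈log₂ N⌉} - 1` for `n ≥ ⌈log₂ N⌉`. -/
def f (n N : ℕ) : ℕ :=
  if n ≤ Nat.clog 2 N then 2 ^ n - 1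
  else (N - 1) * (n - Nat.clog 2 N) + 2 ^ (Nat.clog 2 N) - 1

lemma fcast (n N : ℕ) (hN : 1 ≤ N) (h : Nat.clog 2 N ≤ n) :
    (f n N : ℤ) = ((N : ℤ) - 1) * ((n : ℤ) - (Nat.clog 2 N : ℤ))
      + 2 ^ (Nat.clog 2 N) - 1 := by
  unfold f
  split_ifs with hle
  · have hn : n = Nat.clog 2 N := le_antisymm hle h
    rw [← hn]
    have h1 : (1 : ℕ) ≤ 2 ^ n := Nat.one_le_two_pow
    push_cast [h1]
    ring
  · have h1 : (1 : ℕ) ≤ (N - 1) * (n - Nat.clog 2 N) + 2 ^ (Nat.clog 2 N) :=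
      Nat.one_le_two_pow.trans (Nat.le_add_left _ _)
    push_cast [h1, hN, h]
    ring

lemma fcast2 (n N : ℕ) (h : n ≤ Nat.clog 2 N) : (f n N : ℤ) = 2 ^ n - 1 := by
  unfold f
  rw [if_pos h]
  push_cast [Nat.one_le_two_pow (n := n)]
  ring

lemma clog_succ_le (N : ℕ) : Nat.clog 2 (N + 1) ≤ Nat.clog 2 N + 1 := by
  rw [Nat.clog_le_iff_le_pow one_lt_two]
  have h1 := Nat.le_pow_clog one_lt_two N
  have h2 : 1 ≤ 2 ^ Nat.clog 2 N := Nat.one_le_two_pow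
  have : (2 : ℕ) ^ (Nat.clog 2 N + 1) = 2 ^ Nat.clog 2 N + 2 ^ Nat.clog 2 N := by
    ring
  omega

lemma delta_eq (n N : ℕ) (hN : 1 ≤ N) (h : Nat.clog 2 (N + 1) ≤ n) :
    (f n (N + 1) : ℤ) - (f n N : ℤ) = (n : ℤ) - (Nat.clog 2 N : ℤ) := by
  have hc : Nat.clog 2 N ≤ Nat.clog 2 (N + 1) := Nat.clog_mono_right 2 (by omega)
  have hcn : Nat.clog 2 N ≤ n := le_trans hc h
  rw [fcast n (N + 1) (by omega) h, fcast n N hN hcn]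
  rcases eq_or_lt_of_le hc with he | hl
  · rw [← he]
    push_cast
    ring
  · have hc1 : Nat.clog 2 (N + 1) = Nat.clog 2 N + 1 :=
      le_antisymm (clog_succ_le N) hl
    have hNle : N ≤ 2 ^ Nat.clog 2 N := Nat.le_pow_clog one_lt_two N
    have hNge : ¬(N + 1 ≤ 2 ^ Nat.clog 2 N) := by
      rw [← Nat.clog_le_iff_le_pow one_lt_two]
      omega
    have hNeq : (N : ℤ) = 2 ^ Nat.clog 2 N := by exact_mod_cast (by omega : N = 2 ^ Nat.clog 2 N)
    rw [hc1]
    push_cast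
    rw [hNeq]
    ring

/-- The discrete derivative of `f` in `N`: it equals `n - ⌈log₂ N⌉` when
`n ≥ ⌈log₂(N+1)⌉` and `0` when `n ≤ ⌈log₂ N⌉`; in particular, for fixed `n`
it is nonincreasing in `N`. -/
theorem f_delta (n N : ℕ) (hN : 1 ≤ N) :
    (Nat.clog 2 (N + 1) ≤ n →
      (f n (N + 1) : ℤ) - (f n N : ℤ) = (n : ℤ) - (Nat.clog 2 N : ℤ)) ∧
    (n ≤ Nat.clog 2 N → (f n (N + 1) : ℤ) - (f n N : ℤ) = 0) ∧
    (∀ M : ℕ, N ≤ M →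
      (f n (M + 1) : ℤ) - (f n M : ℤ) ≤ (f n (N + 1) : ℤ) - (f n N : ℤ)) := by
  refine ⟨delta_eq n N hN, ?_, ?_⟩
  · intro h
    have h' : n ≤ Nat.clog 2 (N + 1) :=
      le_trans h (Nat.clog_mono_right 2 (by omega))
    rw [fcast2 n (N + 1) h', fcast2 n N h]
    ring
  · intro M hM
    by_cases hn : n ≤ Nat.clog 2 N
    · have hM' : n ≤ Nat.clog 2 M := le_trans hn (Nat.clog_mono_right 2 hM)
      have hM'' : n ≤ Nat.clog 2 (M + 1) :=
        le_trans hM' (Nat.clog_mono_right 2 (by omega))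
      have hN' : n ≤ Nat.clog 2 (N + 1) :=
        le_trans hn (Nat.clog_mono_right 2 (by omega))
      rw [fcast2 n (M + 1) hM'', fcast2 n M hM', fcast2 n (N + 1) hN', fcast2 n N hn]
    · have hn' : Nat.clog 2 (N + 1) ≤ n := by
        have := clog_succ_le N
        omega
      rw [delta_eq n N hN hn']
      by_cases hm : n ≤ Nat.clog 2 M
      · have hm' : n ≤ Nat.clog 2 (M + 1) :=
          le_trans hm (Nat.clog_mono_right 2 (by omega))
        rw [fcast2 n (M + 1) hm', fcast2 n M hm]
        omega
      · have hm' : Nat.clog 2 (M + 1) ≤ n := by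
          have := clog_succ_le M
          omega
        rw [delta_eq n M (by omega) hm']
        have : Nat.clog 2 N ≤ Nat.clog 2 M := Nat.clog_mono_right 2 hM
        omega
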